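/- Let G be a (P3 ∪ P2, house)-free graph such that every proper induced subgraph G' of G satisfies χ(G') ≤ 2ω(G'), while χ(G) > 2ω(G), and suppose v1, v2, v3, v4 induce a 2K2 in G with edges v1v2 and v3v4. Then for every S ⊆ {1,2,3,4} with |S| = 2, the induced subgraph G[N_S] is P3-free. -/

import Mathlib

open SimpleGraph

/-- The disjoint union of a path on 3 vertices and a path on 2 vertices,
with edges `01`, `12` and `34`. -/
def P3uP2 : SimpleGraph (Fin 5) :=
  SimpleGraph.fromEdgeSet {s(0, 1), s(1, 2), s(3, 4)}

/-- The house graph: the complement of the path on 5 vertices. -/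
def house : SimpleGraph (Fin 5) := (SimpleGraph.pathGraph 5)ᶜ

/-- `G` has no induced subgraph isomorphic to `H`. -/
def IsInducedFree {V : Type*} {W : Type*} (G : SimpleGraph V) (H : SimpleGraph W) : Prop :=
  IsEmpty (H ↪g G)

/-- The four distinct vertices `v 0, v 1, v 2, v 3` induce a `2K₂` in `G`,
with edges `v 0 — v 1` and `v 2 — v 3` (here `v 0, v 1, v 2, v 3` play the roles of
`v₁, v₂, v₃, v₄`). -/
def Induces2K2 {V : Type*} (G : SimpleGraph V) (v : Fin 4 → V) : Prop :=
  Function.Injective v ∧ G.Adj (v 0) (v 1) ∧ G.Adj (v 2) (v 3) ∧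
  ¬ G.Adj (v 0) (v 2) ∧ ¬ G.Adj (v 0) (v 3) ∧ ¬ G.Adj (v 1) (v 2) ∧ ¬ G.Adj (v 1) (v 3)

/-- `NS G v S` is the set of vertices outside `{v 0, v 1, v 2, v 3}` that are adjacent
to `v i` exactly for the indices `i ∈ S`. -/
def NS {V : Type*} (G : SimpleGraph V) (v : Fin 4 → V) (S : Finset (Fin 4)) : Set V :=
  {u | (∀ i, u ≠ v i) ∧ ∀ i, G.Adj u (v i) ↔ i ∈ S}

/-- `X` is anticomplete to `Y`: there is no edge between `X` and `Y`. -/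
def Anticomplete {V : Type*} (G : SimpleGraph V) (X Y : Set V) : Prop :=
  ∀ x ∈ X, ∀ y ∈ Y, ¬ G.Adj x y

/-- `X` is complete to `Y`: every vertex of `X` is adjacent to every vertex of `Y`. -/
def CompleteTo {V : Type*} (G : SimpleGraph V) (X Y : Set V) : Prop :=
  ∀ x ∈ X, ∀ y ∈ Y, G.Adj x y

set_option maxHeartbeats 1000000 in
lemma p3p2_case {V : Type*} {G : SimpleGraph V} (h1 : IsInducedFree G P3uP2)
    (p q r s t : V) (hpr' : p ≠ r)
    (hpq : G.Adj p q) (hqr : G.Adj q r) (hst : G.Adj s t)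
    (hpr : ¬ G.Adj p r) (hps : ¬ G.Adj p s) (hpt : ¬ G.Adj p t)
    (hqs : ¬ G.Adj q s) (hqt : ¬ G.Adj q t) (hrs : ¬ G.Adj r s) (hrt : ¬ G.Adj r t) :
    False := by
  have hps' : p ≠ s := fun h => hpt (h ▸ hst)
  have hpt' : p ≠ t := fun h => hps (h ▸ hst.symm)
  have hqs' : q ≠ s := fun h => hqt (h ▸ hst)
  have hqt' : q ≠ t := fun h => hqs (h ▸ hst.symm)
  have hrs' : r ≠ s := fun h => hrt (h ▸ hst)
  have hrt' : r ≠ t := fun h => hrs (h ▸ hst.symm)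
  have h1' : ¬ G.Adj r p := fun h => hpr h.symm
  have h2' : ¬ G.Adj s p := fun h => hps h.symm
  have h3' : ¬ G.Adj t p := fun h => hpt h.symm
  have h4' : ¬ G.Adj s q := fun h => hqs h.symm
  have h5' : ¬ G.Adj t q := fun h => hqt h.symm
  have h6' : ¬ G.Adj s r := fun h => hrs h.symm
  have h7' : ¬ G.Adj t r := fun h => hrt h.symm
  exact h1.false ⟨⟨![p,q,r,s,t], by
      intro i j hij
      fin_cases i <;> fin_cases j <;> first
        | rfl
        | (exfalso; simp only [Matrix.cons_val_zero, Matrix.cons_val_one, Matrix.head_cons,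
            Matrix.cons_val_two, Matrix.tail_cons, Matrix.cons_val_three,
            Matrix.cons_val_four] at hij; simp_all)⟩, by
    intro i j
    show G.Adj (![p,q,r,s,t] i) (![p,q,r,s,t] j) ↔ P3uP2.Adj i j
    fin_cases i <;> fin_cases j <;>
      simp only [Matrix.cons_val_zero, Matrix.cons_val_one, Matrix.head_cons,
        Matrix.cons_val_two, Matrix.tail_cons, Matrix.cons_val_three, Matrix.cons_val_four,
        Function.Embedding.coeFn_mk, Fin.zero_eta, Fin.mk_one, Fin.reduceFinMk] <;>
      simp_all [P3uP2, hpq.symm, hqr.symm, hst.symm, G.irrefl]⟩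

set_option maxHeartbeats 1000000 in
/-- Vertices `a b c d e` forming a house: edges `ac, ad, ae, bd, be, ce`,
nonedges `ab, bc, cd, de`. -/
lemma house_case {V : Type*} {G : SimpleGraph V} (h2 : IsInducedFree G house)
    (a b c d e : V)
    (hac : G.Adj a c) (had : G.Adj a d) (hae : G.Adj a e)
    (hbd : G.Adj b d) (hbe : G.Adj b e) (hce : G.Adj c e)
    (hab : ¬ G.Adj a b) (hbc : ¬ G.Adj b c) (hcd : ¬ G.Adj c d) (hde : ¬ G.Adj d e) :
    False := by
  have nab : a ≠ b := fun h => hbc (h ▸ hac)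
  have nbc : b ≠ c := fun h => hcd (h ▸ hbd)
  have ncd : c ≠ d := fun h => hde (h ▸ hce)
  have nde : d ≠ e := fun h => (h ▸ hcd) hce
  have s1 : ¬ G.Adj b a := fun h => hab h.symm
  have s2 : ¬ G.Adj c b := fun h => hbc h.symm
  have s3 : ¬ G.Adj d c := fun h => hcd h.symm
  have s4 : ¬ G.Adj e d := fun h => hde h.symm
  exact h2.false ⟨⟨![a,b,c,d,e], by
      intro i j hij
      fin_cases i <;> fin_cases j <;> first
        | rfl
        | (exfalso; simp only [Matrix.cons_val_zero, Matrix.cons_val_one, Matrix.head_cons,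
            Matrix.cons_val_two, Matrix.tail_cons, Matrix.cons_val_three,
            Matrix.cons_val_four] at hij; simp_all)⟩, by
    intro i j
    show G.Adj (![a,b,c,d,e] i) (![a,b,c,d,e] j) ↔ house.Adj i j
    fin_cases i <;> fin_cases j <;>
      simp only [Matrix.cons_val_zero, Matrix.cons_val_one, Matrix.head_cons,
        Matrix.cons_val_two, Matrix.tail_cons, Matrix.cons_val_three, Matrix.cons_val_four,
        Function.Embedding.coeFn_mk, Fin.zero_eta, Fin.mk_one, Fin.reduceFinMk] <;>
      simp_all [house, pathGraph_adj, hac.symm, had.symm, hae.symm, hbd.symm, hbe.symm,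
        hce.symm, hac.ne, had.ne, hae.ne, hbd.ne, hbe.ne, hce.ne, hac.ne', had.ne', hae.ne',
        hbd.ne', hbe.ne', hce.ne', G.irrefl] <;> decide⟩

lemma cliqueNum_induce_le {V : Type*} [Fintype V] (G : SimpleGraph V) (s : Set V)
    [DecidablePred (· ∈ s)] : (G.induce s).cliqueNum ≤ G.cliqueNum := by
  classical
  obtain ⟨t, ht⟩ := (G.induce s).exists_isNClique_cliqueNum
  have h : G.IsNClique (G.induce s).cliqueNum (t.map (Function.Embedding.subtype _)) := by
    constructor
    · intro p hp q hq hpq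
      simp only [Finset.coe_map, Set.mem_image, Finset.mem_coe] at hp hq
      obtain ⟨a, ha, rfl⟩ := hp
      obtain ⟨b, hb, rfl⟩ := hq
      have : a ≠ b := fun h => hpq (by rw [h])
      exact ht.1 ha hb (by simpa [Subtype.ext_iff] using hpq)
    · rw [Finset.card_map, ht.2]
  have h2 : (t.map (Function.Embedding.subtype _)).card ≤ G.cliqueNum :=
    IsClique.card_le_cliqueNum (tc := h.1)
  rwa [Finset.card_map, ht.2] at h2

/-- In a minimal graph with `χ > 2ω`, no vertex `u` is dominated by a
nonadjacent vertex `w`. -/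
lemma no_dominated {V : Type*} [Fintype V] (G : SimpleGraph V)
    (hmin : ∀ s : Set V, s ≠ Set.univ →
      (G.induce s).chromaticNumber ≤ 2 * ((G.induce s).cliqueNum : ℕ∞))
    (hG : 2 * (G.cliqueNum : ℕ∞) < G.chromaticNumber)
    (u w : V) (hne : u ≠ w) (hnadj : ¬ G.Adj u w)
    (hdom : ∀ t, G.Adj u t → G.Adj w t) : False := by
  classical
  set s : Set V := {u}ᶜ with hs
  have hsne : s ≠ Set.univ := by
    intro h
    have : u ∈ s := h ▸ Set.mem_univ u
    simp [hs] at this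
  have hws : w ∈ s := by simp [hs, Ne.symm hne]
  -- χ(G) ≤ χ(G[s])
  have hchrom : G.chromaticNumber ≤ (G.induce s).chromaticNumber := by
    apply chromaticNumber_le_of_forall_imp
    intro n ⟨c⟩
    refine ⟨Coloring.mk (fun p => if h : p ∈ s then c ⟨p, h⟩ else c ⟨w, hws⟩) ?_⟩
    intro p q hpq
    by_cases hp : p ∈ s <;> by_cases hq : q ∈ s
    · simp only [dif_pos hp, dif_pos hq]
      exact c.valid (by exact hpq)
    · simp only [dif_pos hp, dif_neg hq]
      have hq' : q = u := by simpa [hs] using hq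
      subst hq'
      have : G.Adj w p := hdom p hpq.symm
      exact fun hcc => c.valid (show (G.induce s).Adj ⟨p,hp⟩ ⟨w,hws⟩ from this.symm) (by simpa using hcc)
    · simp only [dif_neg hp, dif_pos hq]
      have hp' : p = u := by simpa [hs] using hp
      subst hp'
      have : G.Adj w q := hdom q hpq
      exact fun hcc => c.valid (show (G.induce s).Adj ⟨w,hws⟩ ⟨q,hq⟩ from this) (by simpa using hcc)
    · exfalso
      have hp' : p = u := by simpa [hs] using hp
      have hq' : q = u := by simpa [hs] using hq
      exact G.irrefl (hp' ▸ hq' ▸ hpq)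
  have hclique : ((G.induce s).cliqueNum : ℕ∞) ≤ (G.cliqueNum : ℕ∞) := by
    exact_mod_cast cliqueNum_induce_le G s
  have := hG.trans_le (hchrom.trans ((hmin s hsne).trans (by
    exact mul_le_mul_right hclique 2)))
  exact lt_irrefl _ this

/-- The mixed case: a `2K2` on `a-b`, `c-d`, and an induced `P3` `x-y-z` whose vertices are
all adjacent to `a` and `c` and nonadjacent to `b` and `d`, yields a contradiction. -/
lemma mixed_case {V : Type*} [Fintype V] {G : SimpleGraph V}
    (h1 : IsInducedFree G P3uP2) (h2 : IsInducedFree G house)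
    (hmin : ∀ s : Set V, s ≠ Set.univ →
      (G.induce s).chromaticNumber ≤ 2 * ((G.induce s).cliqueNum : ℕ∞))
    (hG : 2 * (G.cliqueNum : ℕ∞) < G.chromaticNumber)
    (a b c d x y z : V)
    (hab : G.Adj a b) (hcd : G.Adj c d)
    (hac : ¬ G.Adj a c) (had : ¬ G.Adj a d) (hbc : ¬ G.Adj b c) (hbd : ¬ G.Adj b d)
    (hxa : G.Adj x a) (hya : G.Adj y a) (hza : G.Adj z a)
    (hxc : G.Adj x c) (hyc : G.Adj y c) (hzc : G.Adj z c)
    (hxb : ¬ G.Adj x b) (hyb : ¬ G.Adj y b) (hzb : ¬ G.Adj z b)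
    (hxd : ¬ G.Adj x d) (hyd : ¬ G.Adj y d) (hzd : ¬ G.Adj z d)
    (hxy : G.Adj x y) (hyz : G.Adj y z) (hxz : ¬ G.Adj x z) (hxz' : x ≠ z) :
    False := by
  refine no_dominated G hmin hG b x (fun h => hbc (h ▸ hxc)) (fun h => hxb h.symm) ?_
  intro t hbt
  by_contra htx
  -- `t` is adjacent to `b` but not to `x`; derive a forbidden induced subgraph.
  by_cases hty : G.Adj t y
  · by_cases hta : G.Adj t a
    · by_cases htc : G.Adj t c
      · -- E4 : house (a, c, b, x, t)
        exact house_case h2 a c b x t hab hxa.symm hta.symm hxc.symm htc.symm hbt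
          hac (fun h => hbc h.symm) (fun h => hxb h.symm) htx
      · by_cases htd : G.Adj t d
        · -- E7 : house (y, d, x, t, c)
          exact house_case h2 y d x t c hxy.symm hty.symm hyc htd.symm hcd.symm hxc
            hyd (fun h => hxd h.symm) htx htc
        · -- E2 : p3p2 (x, c, d, b, t)
          exact p3p2_case h1 x c d b t (fun h => had (h ▸ hxa).symm) hxc hcd hbt
            hxd hxb htx (fun h => hbc h.symm) (fun h => htc h.symm)
            (fun h => hbd h.symm) (fun h => htd h.symm)
    · -- E5 : house (y, b, x, t, a)
      exact house_case h2 y b x t a hxy.symm hty.symm hya hbt hab.symm hxa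
        hyb (fun h => hxb h.symm) htx hta
  · by_cases htz : G.Adj t z
    · by_cases htc : G.Adj t c
      · by_cases hta : G.Adj t a
        · -- E4 : house (a, c, b, x, t)
          exact house_case h2 a c b x t hab hxa.symm hta.symm hxc.symm htc.symm hbt
            hac (fun h => hbc h.symm) (fun h => hxb h.symm) htx
        · -- E6 : house (z, x, t, a, c)
          exact house_case h2 z x t a c htz.symm hza hzc hxa hxc htc
            (fun h => hxz h.symm) htx hta hac
      · by_cases htd : G.Adj t d
        · -- E3 : p3p2 (b, t, d, x, y)
          exact p3p2_case h1 b t d x y (fun h => had (h ▸ hab)) hbt htd hxy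
            hbd (fun h => hxb h.symm) (fun h => hyb h.symm) (fun h => htx h.symm) hty
            (fun h => hxd h.symm) (fun h => hyd h.symm)
        · -- E2 : p3p2 (x, c, d, b, t)
          exact p3p2_case h1 x c d b t (fun h => had (h ▸ hxa).symm) hxc hcd hbt
            hxd hxb htx (fun h => hbc h.symm) (fun h => htc h.symm)
            (fun h => hbd h.symm) (fun h => htd h.symm)
    · -- E1 : p3p2 (x, y, z, b, t)
      exact p3p2_case h1 x y z b t hxz' hxy hyz hbt hxz hxb htx
        hyb (fun h => hty h.symm) hzb (fun h => htz h.symm)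

theorem F2_NS_card_two_P3_free
    {V : Type*} [Fintype V] (G : SimpleGraph V)
    (h1 : IsInducedFree G P3uP2) (h2 : IsInducedFree G house)
    (hmin : ∀ s : Set V, s ≠ Set.univ →
      (G.induce s).chromaticNumber ≤ 2 * ((G.induce s).cliqueNum : ℕ∞))
    (hG : 2 * (G.cliqueNum : ℕ∞) < G.chromaticNumber)
    (v : Fin 4 → V) (h2k2 : Induces2K2 G v) :
    ∀ S : Finset (Fin 4), S.card = 2 →
      IsInducedFree (G.induce (NS G v S)) (SimpleGraph.pathGraph 3) := by
  intro S hS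
  obtain ⟨hinj, h01, h23, h02, h03, h12, h13⟩ := h2k2
  constructor
  intro e
  set x : V := (e 0 : ↥(NS G v S)).1 with hxdef
  set y : V := (e 1 : ↥(NS G v S)).1 with hydef
  set z : V := (e 2 : ↥(NS G v S)).1 with hzdef
  have hx : x ∈ NS G v S := (e 0).2
  have hy : y ∈ NS G v S := (e 1).2
  have hz : z ∈ NS G v S := (e 2).2
  have hxy : G.Adj x y := e.map_rel_iff.mpr (by simp [pathGraph_adj])
  have hyz : G.Adj y z := e.map_rel_iff.mpr (by simp [pathGraph_adj])
  have hxz : ¬ G.Adj x z := fun h => by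
    have := e.map_rel_iff.mp (show (G.induce (NS G v S)).Adj (e 0) (e 2) from h)
    simp [pathGraph_adj] at this
  have hxz' : x ≠ z := fun h =>
    (e.injective.ne (show (0 : Fin 3) ≠ 2 by decide)) (Subtype.ext h)
  have hS6 : S = {0,1} ∨ S = {0,2} ∨ S = {0,3} ∨ S = {1,2} ∨ S = {1,3} ∨ S = {2,3} :=
    (show ∀ T : Finset (Fin 4), T.card = 2 →
      T = {0,1} ∨ T = {0,2} ∨ T = {0,3} ∨ T = {1,2} ∨ T = {1,3} ∨ T = {2,3} by decide) S hS
  have adjS : ∀ u : V, u ∈ NS G v S → ∀ i : Fin 4, i ∈ S → G.Adj u (v i) :=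
    fun u hu i hi => (hu.2 i).mpr hi
  have nadjS : ∀ u : V, u ∈ NS G v S → ∀ i : Fin 4, i ∉ S → ¬ G.Adj u (v i) :=
    fun u hu i hi h => hi ((hu.2 i).mp h)
  rcases hS6 with rfl | rfl | rfl | rfl | rfl | rfl
  · -- S = {0,1} : x,y,z anticomplete to v2,v3 ; P3 ∪ (v2‑v3)
    exact p3p2_case h1 x y z (v 2) (v 3) hxz' hxy hyz h23 hxz
      (nadjS x hx 2 (by decide)) (nadjS x hx 3 (by decide))
      (nadjS y hy 2 (by decide)) (nadjS y hy 3 (by decide))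
      (nadjS z hz 2 (by decide)) (nadjS z hz 3 (by decide))
  · -- S = {0,2} : mixed, a = v0, b = v1, c = v2, d = v3
    exact mixed_case h1 h2 hmin hG (v 0) (v 1) (v 2) (v 3) x y z h01 h23 h02 h03 h12 h13
      (adjS x hx 0 (by decide)) (adjS y hy 0 (by decide)) (adjS z hz 0 (by decide))
      (adjS x hx 2 (by decide)) (adjS y hy 2 (by decide)) (adjS z hz 2 (by decide))
      (nadjS x hx 1 (by decide)) (nadjS y hy 1 (by decide)) (nadjS z hz 1 (by decide))
      (nadjS x hx 3 (by decide)) (nadjS y hy 3 (by decide)) (nadjS z hz 3 (by decide))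
      hxy hyz hxz hxz'
  · -- S = {0,3} : mixed, a = v0, b = v1, c = v3, d = v2
    exact mixed_case h1 h2 hmin hG (v 0) (v 1) (v 3) (v 2) x y z h01 h23.symm h03 h02
      h13 h12
      (adjS x hx 0 (by decide)) (adjS y hy 0 (by decide)) (adjS z hz 0 (by decide))
      (adjS x hx 3 (by decide)) (adjS y hy 3 (by decide)) (adjS z hz 3 (by decide))
      (nadjS x hx 1 (by decide)) (nadjS y hy 1 (by decide)) (nadjS z hz 1 (by decide))
      (nadjS x hx 2 (by decide)) (nadjS y hy 2 (by decide)) (nadjS z hz 2 (by decide))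
      hxy hyz hxz hxz'
  · -- S = {1,2} : mixed, a = v1, b = v0, c = v2, d = v3
    exact mixed_case h1 h2 hmin hG (v 1) (v 0) (v 2) (v 3) x y z h01.symm h23 h12 h13
      h02 h03
      (adjS x hx 1 (by decide)) (adjS y hy 1 (by decide)) (adjS z hz 1 (by decide))
      (adjS x hx 2 (by decide)) (adjS y hy 2 (by decide)) (adjS z hz 2 (by decide))
      (nadjS x hx 0 (by decide)) (nadjS y hy 0 (by decide)) (nadjS z hz 0 (by decide))
      (nadjS x hx 3 (by decide)) (nadjS y hy 3 (by decide)) (nadjS z hz 3 (by decide))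
      hxy hyz hxz hxz'
  · -- S = {1,3} : mixed, a = v1, b = v0, c = v3, d = v2
    exact mixed_case h1 h2 hmin hG (v 1) (v 0) (v 3) (v 2) x y z h01.symm h23.symm h13
      h12 h03 h02
      (adjS x hx 1 (by decide)) (adjS y hy 1 (by decide)) (adjS z hz 1 (by decide))
      (adjS x hx 3 (by decide)) (adjS y hy 3 (by decide)) (adjS z hz 3 (by decide))
      (nadjS x hx 0 (by decide)) (nadjS y hy 0 (by decide)) (nadjS z hz 0 (by decide))
      (nadjS x hx 2 (by decide)) (nadjS y hy 2 (by decide)) (nadjS z hz 2 (by decide))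
      hxy hyz hxz hxz'
  · -- S = {2,3} : x,y,z anticomplete to v0,v1 ; P3 ∪ (v0‑v1)
    exact p3p2_case h1 x y z (v 0) (v 1) hxz' hxy hyz h01 hxz
      (nadjS x hx 0 (by decide)) (nadjS x hx 1 (by decide))
      (nadjS y hy 0 (by decide)) (nadjS y hy 1 (by decide))
      (nadjS z hz 0 (by decide)) (nadjS z hz 1 (by decide))
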